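/- If L : C → D is a localization functor (D is the localization of C at a class of morphisms W), then L is both final and initial: for every d ∈ D, the comma categories d ↓ L and L ↓ d are connected. -/

import Mathlib

open CategoryTheory

namespace LocalizationFinalAux

open CategoryTheory.Localization.Construction

variable {C : Type u₁} [Category.{v₁} C] (W : MorphismProperty C)

lemma Qobj_surjective (B : W.Localization) : ∃ Y : C, W.Q.obj Y = B := by
  obtain ⟨⟨Y⟩⟩ := B
  exact ⟨Y, rfl⟩

lemma Qobj_injective {X Y : C} (h : W.Q.obj X = W.Q.obj Y) : X = Y :=
  (objEquiv W).injective h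

variable (d : W.Localization)

/-- The auxiliary morphism property. -/
def P : MorphismProperty W.Localization := fun A B g =>
  ∀ (X Y : C) (hA : W.Q.obj X = A) (hB : W.Q.obj Y = B) (f : d ⟶ W.Q.obj X),
    Zigzag (StructuredArrow.mk f)
      (StructuredArrow.mk (f ≫ eqToHom hA ≫ g ≫ eqToHom hB.symm))

instance : (P W d).IsStableUnderComposition where
  comp_mem {A B E} g h hg hh := by
    intro X Z hA hC f
    obtain ⟨Y, hB⟩ := Qobj_surjective W B
    have z₁ := hg X Y hA hB f
    have z₂ := hh Y Z hB hC (f ≫ eqToHom hA ≫ g ≫ eqToHom hB.symm)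
    have e : (f ≫ eqToHom hA ≫ g ≫ eqToHom hB.symm) ≫ eqToHom hB ≫ h ≫ eqToHom hC.symm
        = f ≫ eqToHom hA ≫ (g ≫ h) ≫ eqToHom hC.symm := by simp
    rw [e] at z₂
    exact z₁.trans z₂

lemma P_top : P W d = ⊤ := by
  apply morphismProperty_eq_top
  · intro X₀ Y₀ φ X Y hA hB f
    obtain rfl : X = X₀ := Qobj_injective W hA
    obtain rfl : Y = Y₀ := Qobj_injective W hB
    simp only [eqToHom_refl, Category.comp_id, Category.id_comp]
    exact Zigzag.of_hom (StructuredArrow.homMk φ (by simp))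
  · intro X₀ Y₀ w hw X Y hA hB f
    obtain rfl : X = Y₀ := Qobj_injective W hA
    obtain rfl : Y = X₀ := Qobj_injective W hB
    simp only [eqToHom_refl, Category.comp_id, Category.id_comp]
    refine Zigzag.of_inv (StructuredArrow.homMk w ?_)
    have : (wInv w hw) ≫ W.Q.map w = 𝟙 _ := (wIso w hw).inv_hom_id
    simp [this]

lemma isConnected_structuredArrow_Q : IsConnected (StructuredArrow d W.Q) := by
  obtain ⟨c, hd⟩ := Qobj_surjective W d
  have nonempty : Nonempty (StructuredArrow d W.Q) := ⟨StructuredArrow.mk (eqToHom hd.symm)⟩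
  have key : ∀ j : StructuredArrow d W.Q,
      Zigzag (StructuredArrow.mk (eqToHom hd.symm : d ⟶ W.Q.obj c)) j := by
    intro j
    have hj : P W d j.hom := by
      rw [P_top]
      trivial
    have z := hj c j.right hd rfl (eqToHom hd.symm)
    have e : eqToHom hd.symm ≫ eqToHom hd ≫ j.hom ≫ eqToHom (Eq.refl (W.Q.obj j.right)).symm
        = j.hom := by simp
    rw [e] at z
    exact z.trans (Zigzag.of_inv (StructuredArrow.eta j).hom)
  exact zigzag_isConnected fun j₁ j₂ => (key j₁).symm.trans (key j₂)

instance Q_final : W.Q.Final :=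
  ⟨fun d => isConnected_structuredArrow_Q W d⟩

lemma final_of_isLocalization {D : Type u₂} [Category.{v₂} D] (L : C ⥤ D)
    (W : MorphismProperty C) [L.IsLocalization W] : L.Final := by
  rw [← Functor.final_natIso_iff (Localization.qCompEquivalenceFromModelFunctorIso L W)]
  infer_instance

end LocalizationFinalAux

/-- A localization functor `L : C ⥤ C[W⁻¹]` is both final and initial: all the comma
categories `d ↓ L` and `L ↓ d` are connected (and nonempty). -/
theorem localization_final_and_initial {C : Type u₁} [Category.{v₁} C]
    {D : Type u₂} [Category.{v₂} D] (L : C ⥤ D) (W : MorphismProperty C)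
    [L.IsLocalization W] :
    L.Final ∧ L.Initial := by
  refine ⟨LocalizationFinalAux.final_of_isLocalization L W, ?_⟩
  have : L.op.Final := LocalizationFinalAux.final_of_isLocalization L.op W.op
  exact Functor.initial_of_final_op L
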